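/- The alternating sum (−1)^n ∑_{i=0}^{n} (−1)^i C(n,i) C(n+i,n) equals 1 for every natural number n, where C denotes the binomial coefficient. -/

import Mathlib

open Finset

lemma auxA (n j : ℕ) (hj : j ≤ n) :
    ∑ i ∈ Finset.range (n + 1), (-1 : ℤ) ^ i * (n.choose i : ℤ) * (i.choose j : ℤ)
      = (-1 : ℤ) ^ n * (if j = n then 1 else 0) := by
  have hsub : Finset.Ico j (n + 1) ⊆ Finset.range (n + 1) := by
    rw [Finset.range_eq_Ico]
    exact Finset.Ico_subset_Ico (Nat.zero_le _) le_rfl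
  rw [← Finset.sum_subset hsub (by
    intro i hi hni
    simp only [Finset.mem_range] at hi
    simp only [Finset.mem_Ico, not_and, not_lt] at hni
    have hij : i < j := by
      by_contra h
      exact absurd hi (not_lt.mpr (hni (not_lt.mp h)))
    rw [Nat.choose_eq_zero_of_lt hij]
    push_cast
    ring)]
  rw [Finset.sum_Ico_eq_sum_range]
  have key : ∀ t ∈ Finset.range (n + 1 - j),
      (-1 : ℤ) ^ (j + t) * (n.choose (j + t) : ℤ) * ((j + t).choose j : ℤ)
        = ((-1 : ℤ) ^ j * (n.choose j : ℤ)) * ((-1 : ℤ) ^ t * ((n - j).choose t : ℤ)) := by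
    intro t ht
    simp only [Finset.mem_range] at ht
    have hjt : j + t ≤ n := by omega
    have h1 := Nat.choose_mul (n := n) (Nat.le_add_right j t)
    rw [Nat.add_sub_cancel_left] at h1
    have h2 : ((n.choose (j + t)) : ℤ) * ((j + t).choose j : ℤ)
        = (n.choose j : ℤ) * ((n - j).choose t : ℤ) := by exact_mod_cast h1
    rw [pow_add]
    linear_combination ((-1 : ℤ) ^ j * (-1) ^ t) * h2
  rw [Finset.sum_congr rfl key, ← Finset.mul_sum]
  have hrange : n + 1 - j = (n - j) + 1 := by omega
  rw [hrange, Int.alternating_sum_range_choose]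
  rcases eq_or_lt_of_le hj with h | h
  · subst h
    simp
  · have h1 : ¬ (j = n) := by omega
    have h2 : ¬ (n - j = 0) := by omega
    simp [h1, h2]

theorem alternating_binomial_sum_eq_one (n : ℕ) :
    (-1 : ℤ) ^ n *
      ∑ i ∈ Finset.range (n + 1),
        (-1 : ℤ) ^ i * (n.choose i : ℤ) * ((n + i).choose n : ℤ) = 1 := by
  have step1 : ∀ i : ℕ, ((n + i).choose n : ℤ)
      = ∑ jl ∈ Finset.HasAntidiagonal.antidiagonal n, (n.choose jl.1 : ℤ) * (i.choose jl.2 : ℤ) := by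
    intro i
    rw [Nat.add_choose_eq]
    push_cast
    rfl
  have hmain : ∑ i ∈ Finset.range (n + 1),
        (-1 : ℤ) ^ i * (n.choose i : ℤ) * ((n + i).choose n : ℤ) = (-1 : ℤ) ^ n := by
    calc ∑ i ∈ Finset.range (n + 1),
          (-1 : ℤ) ^ i * (n.choose i : ℤ) * ((n + i).choose n : ℤ)
        = ∑ i ∈ Finset.range (n + 1), ∑ jl ∈ Finset.HasAntidiagonal.antidiagonal n,
            (n.choose jl.1 : ℤ) *
              ((-1 : ℤ) ^ i * (n.choose i : ℤ) * (i.choose jl.2 : ℤ)) := by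
          refine Finset.sum_congr rfl fun i _ => ?_
          rw [step1 i, Finset.mul_sum]
          exact Finset.sum_congr rfl fun jl _ => by ring
      _ = ∑ jl ∈ Finset.HasAntidiagonal.antidiagonal n, (n.choose jl.1 : ℤ) *
            ∑ i ∈ Finset.range (n + 1),
              (-1 : ℤ) ^ i * (n.choose i : ℤ) * (i.choose jl.2 : ℤ) := by
          rw [Finset.sum_comm]
          exact Finset.sum_congr rfl fun jl _ => (Finset.mul_sum _ _ _).symm
      _ = ∑ jl ∈ Finset.HasAntidiagonal.antidiagonal n, (n.choose jl.1 : ℤ) *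
            ((-1 : ℤ) ^ n * (if jl.2 = n then 1 else 0)) := by
          refine Finset.sum_congr rfl fun jl hjl => ?_
          rw [Finset.HasAntidiagonal.mem_antidiagonal] at hjl
          rw [auxA n jl.2 (by omega)]
      _ = (-1 : ℤ) ^ n := by
          rw [Finset.sum_eq_single (0, n)]
          · simp
          · intro jl hjl hne
            rw [Finset.HasAntidiagonal.mem_antidiagonal] at hjl
            have : ¬ (jl.2 = n) := by
              intro h
              apply hne
              have : jl.1 = 0 := by omega
              exact Prod.ext this h
            simp [this]
          · intro h
            exact absurd (Finset.HasAntidiagonal.mem_antidiagonal.mpr (by simp)) h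
  rw [hmain, ← pow_add]
  simp [pow_mul]
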